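/- Existence of the IM-extended channel: for every tripartite quantum state ρ^{A_fB_fC} satisfying ρ^{A_fB_f} = ρ^{A_f} ⊗ ρ^{B_f}, and for all purifications |φ₁⟩^{A_fA} of ρ^{A_f} and |φ₂⟩^{B_fB} of ρ^{B_f}, there exists a quantum channel N^{AB→C} such that (I^{A_fB_f} ⊗ N^{AB→C})(φ₁^{A_fA} ⊗ φ₂^{B_fB}) = ρ^{A_fB_fC}. -/

import Mathlib

open Matrix Kronecker BigOperators Finset
open scoped ComplexOrder

noncomputable section

namespace QIT

abbrev Mat (A : Type) [Fintype A] : Type := Matrix A A ℂ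

/-- A quantum state: positive semidefinite with unit trace. -/
def IsState {A : Type} [Fintype A] (ρ : Mat A) : Prop := ρ.PosSemidef ∧ ρ.trace = 1

/-- A pure quantum state: a rank-one state `|v⟩⟨v|`. -/
def IsPure {A : Type} [Fintype A] (ρ : Mat A) : Prop :=
  IsState ρ ∧ ∃ v : A → ℂ, ρ = Matrix.vecMulVec v (star v)

/-- Partial trace over the second tensor factor. -/
def ptrace₂ {A B : Type} [Fintype A] [Fintype B] (ρ : Mat (A × B)) : Mat A :=
  Matrix.of fun a a' => ∑ b, ρ (a, b) (a', b)

/-- Partial trace over the first tensor factor. -/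
def ptrace₁ {A B : Type} [Fintype A] [Fintype B] (ρ : Mat (A × B)) : Mat B :=
  Matrix.of fun b b' => ∑ a, ρ (a, b) (a, b')

/-- A test (two-outcome POVM element): `0 ≤ T ≤ 1`. -/
def IsTest {A : Type} [Fintype A] [DecidableEq A] (T : Mat A) : Prop := T.PosSemidef ∧ (1 - T).PosSemidef

/-- Smooth hypothesis testing relative entropy
`D_H^ε(ρ‖σ) = -log₂ min { Tr[T σ] : 0 ≤ T ≤ 1, Tr[T ρ] ≥ 1 - ε }`. -/
def DH {A : Type} [Fintype A] [DecidableEq A] (ε : ℝ) (ρ σ : Mat A) : ℝ :=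
  - Real.logb 2
    (sInf { t : ℝ | ∃ T : Mat A, IsTest T ∧ 1 - ε ≤ ((T * ρ).trace).re ∧ t = ((T * σ).trace).re })

/-- Smooth hypothesis testing mutual information `I_H^ε(A:B)_ρ = D_H^ε(ρ^{AB}‖ρ^A ⊗ ρ^B)`. -/
def IH {A B : Type} [Fintype A] [Fintype B] [DecidableEq A] [DecidableEq B] (ε : ℝ) (ρ : Mat (A × B)) : ℝ :=
  DH ε ρ (ptrace₂ ρ ⊗ₖ ptrace₁ ρ)

/-- Max relative entropy `D_max(ρ‖σ) = inf { λ : ρ ≤ 2^λ σ }`. -/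
def Dmax {A : Type} [Fintype A] (ρ σ : Mat A) : ℝ :=
  sInf { l : ℝ | (((2 : ℝ) ^ l) • σ - ρ).PosSemidef }

/-- Max mutual information `I_max(A:B)_ρ = D_max(ρ^{AB}‖ρ^A ⊗ ρ^B)`. -/
def Imax {A B : Type} [Fintype A] [Fintype B] (ρ : Mat (A × B)) : ℝ :=
  Dmax ρ (ptrace₂ ρ ⊗ₖ ptrace₁ ρ)

/-- Trace norm of a Hermitian matrix: sum of absolute values of eigenvalues. -/
def traceNorm {A : Type} [Fintype A] [DecidableEq A] (M : Mat A) : ℝ :=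
  if h : M.IsHermitian then ∑ i, |h.eigenvalues i| else 0

/-- Smooth max mutual information: infimum of `I_max` over the ε-ball around ρ. -/
def smoothImax {A B : Type} [Fintype A] [Fintype B] [DecidableEq A] [DecidableEq B]
    (ε : ℝ) (ρ : Mat (A × B)) : ℝ :=
  sInf { l : ℝ | ∃ ρ' : Mat (A × B),
    ρ'.PosSemidef ∧ ((ρ'.trace).re ≤ 1) ∧ traceNorm (ρ' - ρ) ≤ ε ∧ l = Imax ρ' }

/-- The `(r, r')` block of a matrix on a product system. -/
def matSlice {R A : Type} [Fintype R] [Fintype A] (ρ : Mat (R × A)) (r r' : R) : Mat A :=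
  Matrix.of fun a a' => ρ (r, a) (r', a')

/-- Extension `I_R ⊗ Φ` of a map on matrices, acting trivially on the first factor. -/
def extendMap {R A B : Type} [Fintype R] [Fintype A] [Fintype B]
    (Φ : Mat A → Mat B) (ρ : Mat (R × A)) : Mat (R × B) :=
  Matrix.of fun p q => Φ (matSlice ρ p.1 q.1) p.2 q.2

/-- A quantum channel: linear, trace preserving, completely positive. -/
def IsCPTP {A B : Type} [Fintype A] [Fintype B] (Φ : Mat A → Mat B) : Prop :=
  (∀ (c : ℂ) (x y : Mat A), Φ (c • x + y) = c • Φ x + Φ y) ∧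
  (∀ x : Mat A, (Φ x).trace = x.trace) ∧
  (∀ (R : Type) [Fintype R], ∀ ρ : Mat (R × A), ρ.PosSemidef → (extendMap Φ ρ).PosSemidef)

/-- Marginal `ρ^{A_f C}` of a state on `(A_f × B_f) × C`. -/
def margAC {Af Bf C : Type} [Fintype Af] [Fintype Bf] [Fintype C]
    (ρ : Mat ((Af × Bf) × C)) : Mat (Af × C) :=
  Matrix.of fun p q => ∑ b, ρ ((p.1, b), p.2) ((q.1, b), q.2)

/-- A state on `(A_f × B_f) × C` reindexed as a state on `B_f × (A_f × C)`. -/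
def margB_AC {Af Bf C : Type} [Fintype Af] [Fintype Bf] [Fintype C]
    (ρ : Mat ((Af × Bf) × C)) : Mat (Bf × (Af × C)) :=
  Matrix.of fun p q => ρ ((p.2.1, p.1), p.2.2) ((q.2.1, q.1), q.2.2)

/-- The classical message state `ψ^{MM_A} = |M|⁻¹ ∑_m |m⟩⟨m| ⊗ |m⟩⟨m|`. -/
def msgState (M : Type) [Fintype M] [DecidableEq M] : Mat (M × M) :=
  Matrix.of fun p q => if p.1 = p.2 ∧ q = p then ((Fintype.card M : ℂ))⁻¹ else 0

/-- Reindexing: group spectator registers `(M, E_B)` and acted registers `(M_A, E_A)`. -/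
def arrange1 {M EA EB : Type} [Fintype M] [Fintype EA] [Fintype EB]
    (ξ : Mat ((M × M) × (EA × EB))) : Mat ((M × EB) × (M × EA)) :=
  Matrix.of fun p q => ξ ((p.1.1, p.2.1), (p.2.2, p.1.2)) ((q.1.1, q.2.1), (q.2.2, q.1.2))

/-- Reindexing: group spectator register `M` and acted registers `(B, E_B)`. -/
def arrange2 {M EB B : Type} [Fintype M] [Fintype EB] [Fintype B]
    (ξ : Mat ((M × EB) × B)) : Mat (M × (B × EB)) :=
  Matrix.of fun p q => ξ ((p.1, p.2.2), p.2.1) ((q.1, q.2.2), q.2.1)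

/-- The global state after the encoder of an entanglement-assisted protocol acts. -/
def encodedState {M EA EB A : Type} [Fintype M] [DecidableEq M] [Fintype EA] [Fintype EB]
    [Fintype A] (φ : Mat (EA × EB)) (Enc : Mat (M × EA) → Mat A) : Mat ((M × EB) × A) :=
  extendMap Enc (arrange1 (msgState M ⊗ₖ φ))

/-- The channel-input state of a protocol, averaged over all messages. -/
def channelInput {M EA EB A : Type} [Fintype M] [DecidableEq M] [Fintype EA] [Fintype EB]
    [Fintype A] (φ : Mat (EA × EB)) (Enc : Mat (M × EA) → Mat A) : Mat A :=
  ptrace₁ (encodedState φ Enc)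

/-- The final classical state `(D ∘ N ∘ E)(ψ^{MM_A} ⊗ φ^{E_AE_B})` of a protocol. -/
def finalState {M EA EB A B : Type} [Fintype M] [DecidableEq M] [Fintype EA] [Fintype EB]
    [Fintype A] [Fintype B] (N : Mat A → Mat B) (φ : Mat (EA × EB))
    (Enc : Mat (M × EA) → Mat A) (Dec : Mat (B × EB) → Mat M) : Mat (M × M) :=
  extendMap Dec (arrange2 (extendMap N (encodedState φ Enc)))

/-- Swap the two factors of a bipartite system. -/
def swap12 {A B : Type} [Fintype A] [Fintype B] (ρ : Mat (A × B)) : Mat (B × A) :=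
  Matrix.of fun p q => ρ (p.2, p.1) (q.2, q.1)

/-- Apply a real function to a Hermitian matrix via the spectral decomposition. -/
def herFun {A : Type} [Fintype A] [DecidableEq A] (f : ℝ → ℝ) (M : Mat A) : Mat A :=
  if h : M.IsHermitian then h.cfc f else 0

/-- (Pseudo-)inverse square root of a positive semidefinite matrix. -/
def invSqrt {A : Type} [Fintype A] [DecidableEq A] (M : Mat A) : Mat A :=
  herFun (fun x => Real.sqrt x⁻¹) M

/-- Square root of a positive semidefinite matrix. -/
def matSqrt {A : Type} [Fintype A] [DecidableEq A] (M : Mat A) : Mat A :=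
  herFun Real.sqrt M

/-- The pretty good measurement built from the operators `Λ`. -/
def pgm {I X : Type} [Fintype I] [Fintype X] [DecidableEq X] (Λ : I → Mat X) (m : I) : Mat X :=
  invSqrt (∑ i, Λ i) * Λ m * invSqrt (∑ i, Λ i)

/-- Conjugation `X ρ X†` acting on the first tensor factor. -/
def conjFirst {S T : Type} [Fintype S] [Fintype T] (X : Mat S) (ρ : Mat (S × T)) :
    Mat (S × T) :=
  Matrix.of fun p q => ∑ s, ∑ t, X p.1 s * ρ (s, p.2) (t, q.2) * star (X q.1 t)

end QIT

open QIT

/-- Reindex a state on `(A_f × A) × (B_f × B)` as a state on `(A_f × B_f) × (A × B)`. -/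
def pairSwap {Af A Bf B : Type} [Fintype Af] [Fintype A] [Fintype Bf] [Fintype B]
    (ξ : Mat ((Af × A) × (Bf × B))) : Mat ((Af × Bf) × (A × B)) :=
  Matrix.of fun p q =>
    ξ ((p.1.1, p.2.1), (p.1.2, p.2.2)) ((q.1.1, q.2.1), (q.1.2, q.2.2))

namespace IMAux

/-- Sums of positive semidefinite matrices are positive semidefinite. -/
lemma posSemidef_sum {n ι : Type} [Fintype n] (s : Finset ι) (f : ι → Matrix n n ℂ)
    (h : ∀ i ∈ s, (f i).PosSemidef) : (∑ i ∈ s, f i).PosSemidef :=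
  Finset.sum_induction f _ (fun _ _ ha hb => ha.add hb) Matrix.PosSemidef.zero h

/-- The block-diagonal extension `1 ⊗ K` of a matrix. -/
def blk {A B : Type} (R : Type) [DecidableEq R] (K : Matrix B A ℂ) :
    Matrix (R × B) (R × A) ℂ :=
  Matrix.of fun p q => if p.1 = q.1 then K p.2 q.2 else 0

lemma extendMap_kraus {A B : Type} [Fintype A] [Fintype B]
    {ι : Type} [Fintype ι] (K : ι → Matrix B A ℂ)
    {R : Type} [Fintype R] [DecidableEq R] (ρ : Mat (R × A)) :
    extendMap (fun X => ∑ i, K i * X * (K i)ᴴ) ρ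
      = ∑ i, blk R (K i) * ρ * (blk R (K i))ᴴ := by
  ext p q
  simp only [extendMap, Matrix.of_apply, Matrix.sum_apply]
  refine Finset.sum_congr rfl fun i _ => ?_
  simp only [Matrix.mul_apply, Matrix.conjTranspose_apply, matSlice, Matrix.of_apply, blk,
    ite_mul, zero_mul, Fintype.sum_prod_type]
  have hinner : ∀ (s : R) (a : A),
      (∑ x2 : R, ∑ x3 : A, if p.1 = x2 then K i p.2 x3 * ρ (x2, x3) (s, a) else 0)
      = ∑ x3 : A, K i p.2 x3 * ρ (p.1, x3) (s, a) := by
    intro s a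
    rw [Finset.sum_eq_single p.1]
    · simp
    · intro b _ hb
      exact Finset.sum_eq_zero fun x3 _ => if_neg fun h => hb h.symm
    · intro h; exact absurd (Finset.mem_univ p.1) h
  simp only [hinner]
  simp only [apply_ite (star : ℂ → ℂ), star_zero, mul_ite, mul_zero]
  rw [Finset.sum_comm]
  simp [Finset.sum_ite_eq]

/-- A map given in Kraus form, whose Kraus operators satisfy the normalization
condition, is a quantum channel. -/
lemma kraus_isCPTP {A B : Type} [Fintype A] [Fintype B] [DecidableEq A]
    {ι : Type} [Fintype ι] (K : ι → Matrix B A ℂ)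
    (hK : ∑ i, (K i)ᴴ * K i = 1) :
    IsCPTP (fun (X : Mat A) => ∑ i, K i * X * (K i)ᴴ) := by
  refine ⟨?_, ?_, ?_⟩
  · intro c x y
    show ∑ i, K i * (c • x + y) * (K i)ᴴ
        = c • ∑ i, K i * x * (K i)ᴴ + ∑ i, K i * y * (K i)ᴴ
    simp [Matrix.mul_add, Matrix.add_mul, Matrix.mul_smul, Matrix.smul_mul,
      Finset.sum_add_distrib, Finset.smul_sum]
  · intro x
    show (∑ i, K i * x * (K i)ᴴ).trace = x.trace
    rw [Matrix.trace_sum]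
    calc ∑ i, (K i * x * (K i)ᴴ).trace = ∑ i, ((K i)ᴴ * K i * x).trace :=
          Finset.sum_congr rfl fun i _ => Matrix.trace_mul_cycle _ _ _
      _ = ((∑ i, (K i)ᴴ * K i) * x).trace := by rw [Finset.sum_mul, Matrix.trace_sum]
      _ = x.trace := by rw [hK, one_mul]
  · intro R _ ρ hρ
    classical
    rw [extendMap_kraus]
    exact posSemidef_sum _ _ fun i _ => hρ.mul_mul_conjTranspose_same _

lemma kraus_rankone {A B : Type} [Fintype A] [Fintype B] (K : Matrix B A ℂ) (x y : A → ℂ) :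
    K * Matrix.vecMulVec x (star y) * Kᴴ
      = Matrix.vecMulVec (K *ᵥ x) (star (K *ᵥ y)) := by
  ext c c'
  simp only [Matrix.mul_apply, Matrix.vecMulVec_apply, Matrix.conjTranspose_apply,
    Matrix.mulVec, dotProduct, Pi.star_apply, star_sum, star_mul',
    Finset.sum_mul, Finset.mul_sum]
  exact Finset.sum_congr rfl fun d _ => Finset.sum_congr rfl fun d' _ => by ring

/-- Core construction: given `W` and `U` whose associated Gram matrices agree,
there is a channel sending the rank-one operators built from the columns of `U`
to the corresponding blocks of `Wᴴ * W`. -/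
lemma exists_channel {F C D : Type} [Fintype F] [Fintype C] [Fintype D]
    [DecidableEq F] [DecidableEq C] [DecidableEq D] (c₀ : C)
    (W : Mat (F × C)) (U : Matrix D F ℂ)
    (hLU : (Matrix.of fun (kc : (F × C) × C) (f : F) => star (W kc.1 (f, kc.2)))ᴴ *
           (Matrix.of fun (kc : (F × C) × C) (f : F) => star (W kc.1 (f, kc.2))) = Uᴴ * U) :
    ∃ N : Mat D → Mat C, IsCPTP N ∧
      ∀ f f' : F, N (Matrix.vecMulVec (fun d => U d f) (star fun d => U d f')) =
        Matrix.of fun c c' => (Wᴴ * W) (f, c) (f', c') := by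
  classical
  set L : Matrix ((F × C) × C) F ℂ :=
    Matrix.of fun kc f => star (W kc.1 (f, kc.2)) with hLdef
  set G : Mat F := Uᴴ * U with hGdef
  have hLLG : Lᴴ * L = G := hLU
  have hGpsd : G.PosSemidef := Matrix.posSemidef_conjTranspose_mul_self U
  have hGh : G.IsHermitian := hGpsd.1
  set uM : Mat F := (hGh.eigenvectorUnitary : Mat F) with huM
  have hu1 : uMᴴ * uM = 1 := by
    rw [huM, ← Matrix.star_eq_conjTranspose]
    exact Matrix.mem_unitaryGroup_iff'.mp hGh.eigenvectorUnitary.2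
  set dv : F → ℂ := RCLike.ofReal ∘ hGh.eigenvalues with hdv
  have hGspec : G = uM * Matrix.diagonal dv * uMᴴ := by
    rw [huM, hdv, ← Matrix.star_eq_conjTranspose]
    exact hGh.spectral_theorem
  set Ginv : Mat F := uM * Matrix.diagonal (fun i => (dv i)⁻¹) * uMᴴ with hGinv
  have hdiagmul : ∀ f g : F → ℂ,
      (uM * Matrix.diagonal f * uMᴴ) * (uM * Matrix.diagonal g * uMᴴ)
        = uM * Matrix.diagonal (fun i => f i * g i) * uMᴴ := by
    intro f g
    have h1 : uMᴴ * (uM * (Matrix.diagonal g * uMᴴ)) = Matrix.diagonal g * uMᴴ := by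
      rw [← Matrix.mul_assoc, hu1, Matrix.one_mul]
    calc (uM * Matrix.diagonal f * uMᴴ) * (uM * Matrix.diagonal g * uMᴴ)
        = uM * (Matrix.diagonal f * (uMᴴ * (uM * (Matrix.diagonal g * uMᴴ)))) := by
          simp only [Matrix.mul_assoc]
      _ = uM * (Matrix.diagonal f * (Matrix.diagonal g * uMᴴ)) := by rw [h1]
      _ = uM * Matrix.diagonal (fun i => f i * g i) * uMᴴ := by
          rw [← Matrix.mul_assoc (Matrix.diagonal f), Matrix.diagonal_mul_diagonal,
            ← Matrix.mul_assoc]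
  have hfun1 : (fun i => dv i * ((dv i)⁻¹ * dv i)) = dv := by
    funext i
    rcases eq_or_ne (dv i) 0 with h | h
    · simp [h]
    · field_simp
  have hfun2 : (fun i => (dv i)⁻¹ * (dv i * (dv i)⁻¹)) = fun i => (dv i)⁻¹ := by
    funext i
    rcases eq_or_ne (dv i) 0 with h | h
    · simp [h]
    · field_simp
  have hA : G * (Ginv * G) = G := by
    conv_lhs => rw [hGspec, hGinv]
    simp only [hdiagmul]
    rw [hfun1, ← hGspec]
  have hB : Ginv * (G * Ginv) = Ginv := by
    conv_lhs => rw [hGinv, hGspec]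
    simp only [hdiagmul]
    rw [hfun2, ← hGinv]
  have hGih : Ginvᴴ = Ginv := by
    have hstar : (star fun i => (dv i)⁻¹) = fun i => (dv i)⁻¹ := by
      funext i
      simp [hdv, Pi.star_apply, star_inv₀, RCLike.star_def, RCLike.conj_ofReal]
    rw [hGinv, Matrix.conjTranspose_mul, Matrix.conjTranspose_mul,
      Matrix.conjTranspose_conjTranspose, Matrix.diagonal_conjTranspose, hstar,
      ← Matrix.mul_assoc]
  -- key cancellation lemma
  have key : ∀ {m : Type} [Fintype m] (M : Matrix m F ℂ), Mᴴ * M = G →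
      M * (Ginv * G) = M := by
    intro m _ M hM
    have hM' : ∀ X : Mat F, Mᴴ * (M * X) = G * X := fun X => by
      rw [← Matrix.mul_assoc, hM]
    have h0 : (M * (Ginv * G) - M)ᴴ * (M * (Ginv * G) - M) = 0 := by
      have e1 : (M * (Ginv * G))ᴴ = G * (Ginv * Mᴴ) := by
        rw [Matrix.conjTranspose_mul, Matrix.conjTranspose_mul, hGih, hGh.eq]
        simp only [Matrix.mul_assoc]
      have t1 : G * (Ginv * Mᴴ) * (M * (Ginv * G)) = G := by
        simp only [Matrix.mul_assoc]
        rw [hM' (Ginv * G), hA, hA]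
      have t2 : G * (Ginv * Mᴴ) * M = G := by
        simp only [Matrix.mul_assoc]
        rw [hM, hA]
      have t3 : Mᴴ * (M * (Ginv * G)) = G := by
        rw [hM' (Ginv * G), hA]
      rw [Matrix.conjTranspose_sub, Matrix.sub_mul, Matrix.mul_sub, Matrix.mul_sub, e1, t1, t2, t3, hM]
      abel
    exact sub_eq_zero.mp (Matrix.conjTranspose_mul_self_eq_zero.mp h0)
  have hLP : L * (Ginv * G) = L := key L hLLG
  have hUP : U * (Ginv * G) = U := key U hGdef.symm
  set E : Matrix ((F × C) × C) D ℂ := L * (Ginv * Uᴴ) with hE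
  set P : Mat D := U * (Ginv * Uᴴ) with hP
  have hG' : ∀ X : Matrix F D ℂ, Uᴴ * (U * X) = G * X := fun X => by
    rw [← Matrix.mul_assoc, ← hGdef]
  have hL' : ∀ X : Matrix F D ℂ, Lᴴ * (L * X) = G * X := fun X => by
    rw [← Matrix.mul_assoc, hLLG]
  have hB' : ∀ X : Matrix F D ℂ, Ginv * (G * (Ginv * X)) = Ginv * X := fun X => by
    rw [show Ginv * (G * (Ginv * X)) = (Ginv * (G * Ginv)) * X by
      simp only [Matrix.mul_assoc], hB]
  have hEU : E * U = L := by
    have h : E * U = L * (Ginv * G) := by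
      rw [hE, hGdef]; simp only [Matrix.mul_assoc]
    rw [h, hLP]
  have hPU : P * U = U := by
    have h : P * U = U * (Ginv * G) := by
      rw [hP, hGdef]; simp only [Matrix.mul_assoc]
    rw [h, hUP]
  have hPP : P * P = P := by
    rw [hP]
    simp only [Matrix.mul_assoc]
    rw [hG', hB']
  have hPH : Pᴴ = P := by
    rw [hP, Matrix.conjTranspose_mul, Matrix.conjTranspose_mul, hGih,
      Matrix.conjTranspose_conjTranspose]
    simp only [Matrix.mul_assoc]
  have hEE : Eᴴ * E = P := by
    rw [hE, hP, Matrix.conjTranspose_mul, Matrix.conjTranspose_mul, hGih,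
      Matrix.conjTranspose_conjTranspose]
    simp only [Matrix.mul_assoc]
    rw [hL', hB']
  set Q : Mat D := (1 : Mat D) - P with hQ
  have hQU : Q * U = 0 := by rw [hQ, Matrix.sub_mul, Matrix.one_mul, hPU, sub_self]
  have hQH : Qᴴ = Q := by rw [hQ, Matrix.conjTranspose_sub, Matrix.conjTranspose_one, hPH]
  have hQQ : Qᴴ * Q = Q := by
    rw [hQH, hQ, Matrix.sub_mul, Matrix.one_mul, Matrix.mul_sub, Matrix.mul_one, hPP, sub_self, sub_zero]
  set Kop : ((F × C) ⊕ D) → Matrix C D ℂ :=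
    Sum.elim (fun k => Matrix.of fun c d => E (k, c) d)
      (fun j => Matrix.of fun c d => if c = c₀ then Q j d else 0) with hKop
  have hsum : ∑ i, (Kop i)ᴴ * Kop i = 1 := by
    rw [Fintype.sum_sum_type]
    have h1 : ∑ k : F × C, (Kop (Sum.inl k))ᴴ * Kop (Sum.inl k) = Eᴴ * E := by
      ext d d'
      simp only [Matrix.sum_apply, Matrix.mul_apply, Matrix.conjTranspose_apply,
        hKop, Sum.elim_inl, Matrix.of_apply, Fintype.sum_prod_type]
    have h2 : ∑ j : D, (Kop (Sum.inr j))ᴴ * Kop (Sum.inr j) = Qᴴ * Q := by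
      ext d d'
      simp only [Matrix.sum_apply, Matrix.mul_apply, Matrix.conjTranspose_apply,
        hKop, Sum.elim_inr, Matrix.of_apply, apply_ite (star : ℂ → ℂ), star_zero,
        ite_mul, zero_mul, mul_ite, mul_zero]
      simp [Finset.sum_ite_eq']
    rw [h1, h2, hEE, hQQ, hQ]
    abel
  refine ⟨fun X => ∑ i, Kop i * X * (Kop i)ᴴ, kraus_isCPTP Kop hsum, ?_⟩
  intro f f'
  have hvec : ∀ (i : (F × C) ⊕ D) (g : F),
      Kop i *ᵥ (fun d => U d g)
        = Sum.elim (fun k => fun c => L (k, c) g) (fun _ => (0 : C → ℂ)) i := by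
    rintro (k | j) g
    · funext c
      have h := congrFun (congrFun hEU (k, c)) g
      simp only [Matrix.mul_apply] at h
      simpa [hKop, Matrix.mulVec, dotProduct] using h
    · funext c
      have h := congrFun (congrFun hQU j) g
      simp only [Matrix.mul_apply, Matrix.zero_apply] at h
      rcases eq_or_ne c c₀ with hc | hc
      · simpa [hKop, Matrix.mulVec, dotProduct, hc] using h
      · simp [hKop, Matrix.mulVec, dotProduct, hc]
  show ∑ i, Kop i * Matrix.vecMulVec (fun d => U d f) (star fun d => U d f') * (Kop i)ᴴ
      = Matrix.of fun c c' => (Wᴴ * W) (f, c) (f', c')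
  rw [Finset.sum_congr rfl fun i _ => kraus_rankone (Kop i) _ _]
  rw [Fintype.sum_sum_type]
  have hz : ∑ j : D,
      Matrix.vecMulVec (Kop (Sum.inr j) *ᵥ fun d => U d f)
        (star (Kop (Sum.inr j) *ᵥ fun d => U d f')) = 0 := by
    refine Finset.sum_eq_zero fun j _ => ?_
    rw [hvec (Sum.inr j) f, hvec (Sum.inr j) f']
    ext c c'
    simp [Matrix.vecMulVec_apply]
  rw [hz, add_zero]
  ext c c'
  simp only [Matrix.sum_apply]
  rw [Finset.sum_congr rfl fun k _ => by
    rw [hvec (Sum.inl k) f, hvec (Sum.inl k) f']]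
  simp only [Matrix.vecMulVec_apply, Sum.elim_inl, Pi.star_apply, Matrix.of_apply,
    Matrix.mul_apply, Matrix.conjTranspose_apply, hLdef, star_star]

end IMAux

/-- Existence of the IM-extended channel: for every tripartite state
`ρ^{A_fB_fC}` with `ρ^{A_fB_f} = ρ^{A_f} ⊗ ρ^{B_f}` and all purifications `φ₁^{A_fA}` of
`ρ^{A_f}` and `φ₂^{B_fB}` of `ρ^{B_f}`, there is a channel `N^{AB→C}` with
`(I ⊗ N)(φ₁ ⊗ φ₂) = ρ`. -/
theorem IM_extended_channel_exists
    (Af Bf C A B : Type) [Fintype Af] [Fintype Bf] [Fintype C] [Fintype A] [Fintype B]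
    [DecidableEq Af] [DecidableEq Bf] [DecidableEq C] [DecidableEq A] [DecidableEq B]
    (ρ : Mat ((Af × Bf) × C)) (hρ : IsState ρ)
    (hIM : ptrace₂ ρ = ptrace₂ (ptrace₂ ρ) ⊗ₖ ptrace₁ (ptrace₂ ρ))
    (φ₁ : Mat (Af × A)) (hφ₁ : IsPure φ₁) (hφ₁m : ptrace₂ φ₁ = ptrace₂ (ptrace₂ ρ))
    (φ₂ : Mat (Bf × B)) (hφ₂ : IsPure φ₂) (hφ₂m : ptrace₂ φ₂ = ptrace₁ (ptrace₂ ρ)) :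
    ∃ N : Mat (A × B) → Mat C, IsCPTP N ∧ extendMap N (pairSwap (φ₁ ⊗ₖ φ₂)) = ρ := by
  classical
  obtain ⟨hρpsd, hρtr⟩ := hρ
  obtain ⟨hφ₁s, v, hv⟩ := hφ₁
  obtain ⟨hφ₂s, w, hw⟩ := hφ₂
  obtain ⟨W, hW⟩ : ∃ W : Mat ((Af × Bf) × C), ρ = Wᴴ * W := by
    open scoped MatrixOrder in
    exact CStarAlgebra.nonneg_iff_eq_star_mul_self.mp hρpsd.nonneg
  have hC : Nonempty C := by
    by_contra h
    rw [not_nonempty_iff] at h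
    haveI : IsEmpty ((Af × Bf) × C) := ⟨fun x => h.false x.2⟩
    have h2 := hρtr
    rw [Matrix.trace] at h2
    simp at h2
  obtain ⟨c₀⟩ := hC
  set U : Matrix (A × B) (Af × Bf) ℂ :=
    Matrix.of fun d f => v (f.1, d.1) * w (f.2, d.2) with hU
  have hRHS : ∀ f f' : Af × Bf, (Uᴴ * U) f f' = star ((ptrace₂ ρ) f f') := by
    intro f f'
    have h1 : (Uᴴ * U) f f'
        = (∑ a, star (v (f.1, a)) * v (f'.1, a)) * (∑ b, star (w (f.2, b)) * w (f'.2, b)) := by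
      rw [Matrix.mul_apply, Fintype.sum_prod_type, Fintype.sum_mul_sum]
      simp only [Matrix.conjTranspose_apply, hU, Matrix.of_apply, star_mul']
      exact Finset.sum_congr rfl fun a _ => Finset.sum_congr rfl fun b _ => by ring
    have h2 : ∑ a, star (v (f.1, a)) * v (f'.1, a)
        = star ((ptrace₂ (ptrace₂ ρ)) f.1 f'.1) := by
      rw [← hφ₁m]
      simp only [ptrace₂, Matrix.of_apply, hv, Matrix.vecMulVec_apply, star_sum, star_mul',
        star_star, Pi.star_apply]
    have h3 : ∑ b, star (w (f.2, b)) * w (f'.2, b)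
        = star ((ptrace₁ (ptrace₂ ρ)) f.2 f'.2) := by
      rw [← hφ₂m]
      simp only [ptrace₂, Matrix.of_apply, hw, Matrix.vecMulVec_apply, star_sum, star_mul',
        star_star, Pi.star_apply]
    rw [h1, h2, h3]
    conv_rhs => rw [hIM]
    simp only [Matrix.kroneckerMap_apply, star_mul']
  have hLHS : ∀ f f' : Af × Bf,
      ((Matrix.of fun (kc : ((Af × Bf) × C) × C) (f : Af × Bf) => star (W kc.1 (f, kc.2)))ᴴ *
       (Matrix.of fun (kc : ((Af × Bf) × C) × C) (f : Af × Bf) => star (W kc.1 (f, kc.2)))) f f'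
        = star ((ptrace₂ ρ) f f') := by
    intro f f'
    rw [Matrix.mul_apply, Fintype.sum_prod_type, Finset.sum_comm]
    simp only [Matrix.conjTranspose_apply, Matrix.of_apply, star_star, ptrace₂, star_sum]
    refine Finset.sum_congr rfl fun c _ => ?_
    rw [hW, Matrix.mul_apply, star_sum]
    exact Finset.sum_congr rfl fun k _ => by
      simp only [Matrix.conjTranspose_apply, star_mul', star_star]
  have hGram : (Matrix.of fun (kc : ((Af × Bf) × C) × C) (f : Af × Bf) =>
        star (W kc.1 (f, kc.2)))ᴴ *
      (Matrix.of fun (kc : ((Af × Bf) × C) × C) (f : Af × Bf) => star (W kc.1 (f, kc.2)))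
        = Uᴴ * U := by
    ext f f'
    rw [hLHS, hRHS]
  obtain ⟨N, hN, hNf⟩ := IMAux.exists_channel c₀ W U hGram
  refine ⟨N, hN, ?_⟩
  ext p q
  have hslice : matSlice (pairSwap (φ₁ ⊗ₖ φ₂)) p.1 q.1
      = Matrix.vecMulVec (fun d => U d p.1) (star fun d => U d q.1) := by
    ext d d'
    simp only [matSlice, pairSwap, Matrix.of_apply, Matrix.kroneckerMap_apply, hv, hw,
      Matrix.vecMulVec_apply, Pi.star_apply, hU, star_mul']
    ring
  show N (matSlice (pairSwap (φ₁ ⊗ₖ φ₂)) p.1 q.1) p.2 q.2 = ρ p q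
  rw [hslice, hNf p.1 q.1]
  simp only [Matrix.of_apply, ← hW]
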